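/- Let c : Fin d → ℂ, V : Fin d → Matrix (Fin N) (Fin N) ℂ, and u, v : Fin N → ℂ. Let SEL : Matrix (Fin N × Fin d) (Fin N × Fin d) ℂ be the block-diagonal matrix Matrix.blockDiagonal V, and define the vectors ψ, φ : Fin N × Fin d → ℂ by ψ (n, j) := c j * u n and φ (n, j) := c j * v n. Then star φ ⬝ᵥ (SEL *ᵥ ψ) = ∑ j, (Complex.normSq (c j) : ℂ) * (star v ⬝ᵥ (V j *ᵥ u)). In particular, if PREP′|0⟩ = ∑ j e^{iφ_j}√(q j)|j⟩ with amplitudes c j of squared modulus q j, then ⟨0|ₐ PREP′† · SEL · PREP′ |0⟩ₐ block-encodes ∑ j, q j • V j, independently of the phases of the c j. -/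
import Mathlib


open Matrix

/-- LCU block-encoding identity with the approximated PREP oracle: if
`SEL = blockDiagonal V`, `ψ (n, j) = c j * u n` and `φ (n, j) = c j * v n`, then
`⟨φ| SEL |ψ⟩ = ∑ j, |c j|² · ⟨v| V j |u⟩`, independently of the phases of the `c j`. -/
theorem lcu_block_encoding_identity {d N : ℕ}
    (c : Fin d → ℂ) (V : Fin d → Matrix (Fin N) (Fin N) ℂ)
    (u v : Fin N → ℂ)
    (SEL : Matrix (Fin N × Fin d) (Fin N × Fin d) ℂ)
    (hSEL : SEL = Matrix.blockDiagonal V)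
    (ψ φ : Fin N × Fin d → ℂ)
    (hψ : ∀ nj : Fin N × Fin d, ψ nj = c nj.2 * u nj.1)
    (hφ : ∀ nj : Fin N × Fin d, φ nj = c nj.2 * v nj.1) :
    star φ ⬝ᵥ (SEL *ᵥ ψ) =
      ∑ j, (Complex.normSq (c j) : ℂ) * (star v ⬝ᵥ (V j *ᵥ u)) := by
  subst hSEL
  simp only [dotProduct, mulVec, Pi.star_apply, Fintype.sum_prod_type,
    blockDiagonal_apply, hψ, hφ, dotProduct, mul_ite, mul_zero, ite_mul, zero_mul,
    Finset.sum_ite_eq, Finset.mem_univ, if_true, Finset.mul_sum]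
  rw [Finset.sum_comm]
  refine Finset.sum_congr rfl fun j _ => ?_
  refine Finset.sum_congr rfl fun n _ => ?_
  refine Finset.sum_congr rfl fun m _ => ?_
  have : (Complex.normSq (c j) : ℂ) = star (c j) * c j := by
    rw [Complex.star_def, ← Complex.normSq_eq_conj_mul_self]
  rw [this, star_mul']
  ring
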